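/- Let m = Δ_1 + ⋯ + Δ_N be a multisegment and let Δ_0 be a segment such that the multisegment Δ_0 + m is regular. Then: (1) LC(Δ_0, m) holds if and only if there is no index i with Δ_0 ≺ Δ_i; (2) RC(Δ_0, m) holds if and only if there is no index i with Δ_i ≺ Δ_0. -/
import Mathlib


/-- A segment `[a;b]` is a pair of integers `a ≤ b`. -/
structure Segment where
  a : ℤ
  b : ℤ
  le : a ≤ b

namespace Segment

/-- `Δ ≺ Δ'` : the segment `Δ = [a;b]` precedes `Δ' = [c;d]`,
i.e. `a < c`, `c - 1 ≤ b` and `b < d`. -/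
def prec (Δ Δ' : Segment) : Prop :=
  Δ.a < Δ'.a ∧ Δ'.a - 1 ≤ Δ.b ∧ Δ.b < Δ'.b

/-- `←Δ = [a-1; b-1]`. -/
def shift (Δ : Segment) : Segment :=
  ⟨Δ.a - 1, Δ.b - 1, by have := Δ.le; omega⟩

instance (Δ Δ' : Segment) : Decidable (Δ.prec Δ') := by
  unfold prec; infer_instance

end Segment

/-- A multisegment (given as an indexed family of segments) is regular if the beginnings
of its segments are pairwise distinct and the ends of its segments are pairwise distinct. -/
def Regular {ι : Type*} (Δ : ι → Segment) : Prop :=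
  (∀ i j : ι, (Δ i).a = (Δ j).a → i = j) ∧ (∀ i j : ι, (Δ i).b = (Δ j).b → i = j)

/-- The condition `LC(Δ₀, m)` : there is an injective function
`f : X_{Δ₀,m} → Y_{Δ₀,m}` with `Δ_{f i} ≺ Δ_i` for all `i ∈ X_{Δ₀,m}`,
where `X_{Δ₀,m} = {i | Δ₀ ≺ Δ_i}` and `Y_{Δ₀,m} = {i | ←Δ₀ ≺ Δ_i}`. -/
def LC {ι : Type*} (Δ₀ : Segment) (Δ : ι → Segment) : Prop :=
  ∃ f : ι → ι, Set.InjOn f {i | Δ₀.prec (Δ i)} ∧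
    ∀ i : ι, Δ₀.prec (Δ i) → Δ₀.shift.prec (Δ (f i)) ∧ (Δ (f i)).prec (Δ i)

/-- The condition `RC(Δ₀, m)` : there is an injective function
`f : X̃_{Δ₀,m} → Ỹ_{Δ₀,m}` with `Δ_i ≺ Δ_{f i}` for all `i ∈ X̃_{Δ₀,m}`,
where `X̃_{Δ₀,m} = {i | Δ_i ≺ Δ₀}` and `Ỹ_{Δ₀,m} = {i | ←Δ_i ≺ Δ₀}`. -/
def RC {ι : Type*} (Δ₀ : Segment) (Δ : ι → Segment) : Prop :=
  ∃ f : ι → ι, Set.InjOn f {i | (Δ i).prec Δ₀} ∧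
    ∀ i : ι, (Δ i).prec Δ₀ → (Δ (f i)).shift.prec Δ₀ ∧ (Δ i).prec (Δ (f i))

/-- Lemma 3.2 (lemLcRCvide): if `Δ₀ + m` is a regular multisegment then `LC(Δ₀, m)` holds
iff no segment of `m` is preceded by `Δ₀`, and `RC(Δ₀, m)` holds iff no segment of `m`
precedes `Δ₀`. -/
theorem statement0 {N : ℕ} (Δ₀ : Segment) (Δ : Fin N → Segment)
    (hreg : Regular (Fin.cons Δ₀ Δ : Fin (N + 1) → Segment)) :
    (LC Δ₀ Δ ↔ ¬ ∃ i : Fin N, Δ₀.prec (Δ i)) ∧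
    (RC Δ₀ Δ ↔ ¬ ∃ i : Fin N, (Δ i).prec Δ₀) := by
  obtain ⟨ha, hb⟩ := hreg
  have hane : ∀ i : Fin N, (Δ i).a ≠ Δ₀.a := by
    intro i h
    have := ha (Fin.succ i) 0 (by simpa using h)
    exact (Fin.succ_ne_zero i) this
  have hbne : ∀ i : Fin N, (Δ i).b ≠ Δ₀.b := by
    intro i h
    have := hb (Fin.succ i) 0 (by simpa using h)
    exact (Fin.succ_ne_zero i) this
  have key : ∀ i : Fin N, Δ₀.shift.prec (Δ i) → Δ₀.prec (Δ i) := by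
    intro i hi
    obtain ⟨h1, h2, h3⟩ := hi
    simp only [Segment.shift] at h1 h2 h3
    have := hane i; have := hbne i
    exact ⟨by omega, by omega, by omega⟩
  have key2 : ∀ i : Fin N, (Δ i).shift.prec Δ₀ → (Δ i).prec Δ₀ := by
    intro i hi
    obtain ⟨h1, h2, h3⟩ := hi
    simp only [Segment.shift] at h1 h2 h3
    have := hane i; have := hbne i
    exact ⟨by omega, by omega, by omega⟩
  constructor
  · constructor
    · rintro ⟨f, hinj, hf⟩ ⟨i, hi⟩
      obtain ⟨j, hjS, hjmin⟩ := Finset.exists_min_image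
        (Finset.univ.filter (fun j => Δ₀.prec (Δ j))) (fun j => (Δ j).b)
        ⟨i, by simpa using hi⟩
      have hj : Δ₀.prec (Δ j) := by simpa using hjS
      obtain ⟨hfy, hfprec⟩ := hf j hj
      have hfX : Δ₀.prec (Δ (f j)) := key _ hfy
      have := hjmin (f j) (by simpa using hfX)
      have := hfprec.2.2
      omega
    · intro h
      exact ⟨id, fun x _ y _ hxy => hxy, fun i hi => absurd ⟨i, hi⟩ h⟩
  · constructor
    · rintro ⟨f, hinj, hf⟩ ⟨i, hi⟩
      obtain ⟨j, hjS, hjmax⟩ := Finset.exists_max_image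
        (Finset.univ.filter (fun j => (Δ j).prec Δ₀)) (fun j => (Δ j).b)
        ⟨i, by simpa using hi⟩
      have hj : (Δ j).prec Δ₀ := by simpa using hjS
      obtain ⟨hfy, hfprec⟩ := hf j hj
      have hfX : (Δ (f j)).prec Δ₀ := key2 _ hfy
      have := hjmax (f j) (by simpa using hfX)
      have := hfprec.2.2
      omega
    · intro h
      exact ⟨id, fun x _ y _ hxy => hxy, fun i hi => absurd ⟨i, hi⟩ h⟩
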